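/- Let 0 < η < tρ/12800, and let |||·||| be a norm on X such that (X,|||·|||) is strictly convex, ‖x‖_α ≤ |||x||| ≤ (1 − ρ)⁻²‖x‖ for all x ∈ X, and |||y⁺_α||| ≤ 1 + η and |||y⁻_α||| ≤ 1 + η. Let K ⊆ X be a compact convex set contained in the closed unit ball of |||·|||, and suppose there exists v_K ∈ X with (ρ/4)|||v − v_K||| < η and with the segment [−(ρ/4)v_K, (ρ/4)v_K] contained in K. Suppose moreover that |e*(k)| < tρ/12800 and |h*(k)| < tρ/12800 for all k ∈ K. Then any nearest point map R onto K with respect to |||·||| satisfies |||x⁺_α − x⁻_α||| ≤ (1 − ρ)⁻²·2t and |||R(x⁺_α) − R(x⁻_α)||| ≥ ρ/16; in particular the modulus of continuity of R satisfies ω_R((1 − ρ)⁻²·2t) ≥ ρ/16. -/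
import Mathlib

open Filter Topology Set
open Pointwise

section Defs

variable {X : Type*} [AddCommGroup X] [Module ℝ X]

/-- `N` is a norm on the real vector space `X`. -/
def IsNorm (N : X → ℝ) : Prop :=
  (∀ x : X, N x = 0 ↔ x = 0) ∧
  (∀ (a : ℝ) (x : X), N (a • x) = |a| * N x) ∧
  (∀ x y : X, N (x + y) ≤ N x + N y)

/-- `R` is a nearest point map onto `K` with respect to the norm `N`. -/
def IsNearestPointMap (N : X → ℝ) (K : Set X) (R : X → X) : Prop :=
  ∀ x : X, R x ∈ K ∧ N (x - R x) = sInf ((fun c => N (x - c)) '' K)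

end Defs

section Helpers

set_option maxHeartbeats 1000000

private lemma arith1 (ρ t S H V Ee : ℝ)
    (hρ0 : 0 < ρ) (hρ1 : ρ < 1/4) (ht0 : 0 < t) (ht1 : t < ρ/16)
    (hS : S = 1 - ρ/2 + t*Ee) (hEe : |Ee| ≤ ρ/800) (hH : |H| ≤ 1) (hV : |V| ≤ 1) :
    ((4*t+6*ρ)*(1-ρ) + ρ^2/2 + ρ*t) + t*ρ^2/600 ≤
    (4*t+6*ρ)*(S - t*ρ/12800) + ρ^2/2*(H - t*ρ/12800) - ρ*t*V - ρ*t*(ρ/8) := by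
  obtain ⟨hEe1, hEe2⟩ := abs_le.mp hEe
  obtain ⟨hH1, hH2⟩ := abs_le.mp hH
  obtain ⟨hV1, hV2⟩ := abs_le.mp hV
  subst hS
  nlinarith [mul_le_mul_of_nonneg_left hEe1 (le_of_lt ht0), mul_le_mul_of_nonneg_left hH1 (by positivity : (0:ℝ) ≤ ρ^2/2), mul_le_mul_of_nonneg_left hV1 (by positivity : (0:ℝ) ≤ ρ*t), mul_pos hρ0 ht0, sq_nonneg ρ, sq_nonneg t, mul_pos (mul_pos hρ0 hρ0) ht0]

private lemma arith2 (ρ t S H V Ev Hv : ℝ)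
    (hρ0 : 0 < ρ) (hρ1 : ρ < 1/4) (ht0 : 0 < t) (ht1 : t < ρ/16)
    (hEv : |Ev| ≤ t/1600) (hHv : |Hv| ≤ t/1600) :
    ((4*t+6*ρ)*(S + ρ/4*Ev) + ρ^2/2*(H + ρ/4*Hv) - ρ*t*(V + ρ/4)) + t*ρ^2/600 ≤
    (4*t+6*ρ)*(S - t*ρ/12800) + ρ^2/2*(H - t*ρ/12800) - ρ*t*V - ρ*t*(ρ/8) := by
  obtain ⟨hEv1, hEv2⟩ := abs_le.mp hEv
  obtain ⟨hHv1, hHv2⟩ := abs_le.mp hHv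
  nlinarith [mul_le_mul_of_nonneg_left hEv2 (by positivity : (0:ℝ) ≤ 4*t+6*ρ), mul_le_mul_of_nonneg_left hHv2 (by positivity : (0:ℝ) ≤ ρ^2/2), mul_pos hρ0 ht0, mul_pos (mul_pos hρ0 hρ0) ht0, mul_pos (mul_pos hρ0 ht0) ht0]

private lemma arith3 (ρ t S H V Ee Ev Hv : ℝ)
    (hρ0 : 0 < ρ) (hρ1 : ρ < 1/4) (ht0 : 0 < t) (ht1 : t < ρ/16)
    (hS : S = 1 - ρ/2 + t*Ee)
    (hEe : |Ee| ≤ ρ/800) (hEv : |Ev| ≤ t/1600) (hHv : |Hv| ≤ t/1600)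
    (hH : |H| ≤ 1) (hV : |V| ≤ 1) :
    (-((4*t+6*ρ)*(S + ρ/4*Ev) + ρ^2/2*(H + ρ/4*Hv) - ρ*t*(V + ρ/4))) + t*ρ^2/600 ≤
    (4*t+6*ρ)*(S - t*ρ/12800) + ρ^2/2*(H - t*ρ/12800) - ρ*t*V - ρ*t*(ρ/8) := by
  obtain ⟨hEv1, hEv2⟩ := abs_le.mp hEv
  obtain ⟨hHv1, hHv2⟩ := abs_le.mp hHv
  obtain ⟨hEe1, hEe2⟩ := abs_le.mp hEe
  obtain ⟨hH1, hH2⟩ := abs_le.mp hH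
  obtain ⟨hV1, hV2⟩ := abs_le.mp hV
  subst hS
  nlinarith [mul_le_mul_of_nonneg_left hEv1 (by positivity : (0:ℝ) ≤ 4*t+6*ρ), mul_le_mul_of_nonneg_left hHv1 (by positivity : (0:ℝ) ≤ ρ^2/2), mul_le_mul_of_nonneg_left hEe1 (le_of_lt ht0), mul_le_mul_of_nonneg_left hH1 (by positivity : (0:ℝ) ≤ ρ^2), mul_le_mul_of_nonneg_left hV1 (by positivity : (0:ℝ) ≤ ρ*t), mul_pos hρ0 ht0, mul_pos (mul_pos hρ0 hρ0) ht0]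

private lemma arith4 (ρ t S H V Ee Ev Hv Vh : ℝ)
    (hρ0 : 0 < ρ) (hρ1 : ρ < 1/4) (ht0 : 0 < t) (ht1 : t < ρ/16)
    (hEe : |Ee| ≤ ρ/800) (hEv : |Ev| ≤ t/1600) (hHv : |Hv| ≤ t/1600) (hVh : |Vh| ≤ 1) :
    ((4*t+6*ρ)*(S - 2*t*Ee - ρ/4*Ev) + ρ^2/2*(H - 2*t - ρ/4*Hv) - ρ*t*(V - 2*t*Vh - ρ/4)) + t*ρ^2/600 ≤
    (4*t+6*ρ)*(S - t*ρ/12800) + ρ^2/2*(H - t*ρ/12800) - ρ*t*V - ρ*t*(ρ/8) := by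
  obtain ⟨hEv1, hEv2⟩ := abs_le.mp hEv
  obtain ⟨hHv1, hHv2⟩ := abs_le.mp hHv
  obtain ⟨hEe1, hEe2⟩ := abs_le.mp hEe
  obtain ⟨hVh1, hVh2⟩ := abs_le.mp hVh
  nlinarith [mul_le_mul_of_nonneg_left hEv1 (by positivity : (0:ℝ) ≤ 4*t+6*ρ), mul_le_mul_of_nonneg_left hHv1 (by positivity : (0:ℝ) ≤ ρ^2/2), mul_le_mul_of_nonneg_left hEe1 (by positivity : (0:ℝ) ≤ 2*t*(4*t+6*ρ)), mul_le_mul_of_nonneg_left hVh2 (by positivity : (0:ℝ) ≤ 2*ρ*t*t), mul_pos hρ0 ht0, mul_pos (mul_pos hρ0 hρ0) ht0, mul_pos (mul_pos ht0 ht0) hρ0]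

private lemma arith5 (ρ t S H V Ee Ev Hv Vh : ℝ)
    (hρ0 : 0 < ρ) (hρ1 : ρ < 1/4) (ht0 : 0 < t) (ht1 : t < ρ/16)
    (hS : S = 1 - ρ/2 + t*Ee)
    (hEe : |Ee| ≤ ρ/800) (hEv : |Ev| ≤ t/1600) (hHv : |Hv| ≤ t/1600)
    (hH : |H| ≤ 1) (hV : |V| ≤ 1) (hVh : |Vh| ≤ 1) :
    (-((4*t+6*ρ)*(S - 2*t*Ee - ρ/4*Ev) + ρ^2/2*(H - 2*t - ρ/4*Hv) - ρ*t*(V - 2*t*Vh - ρ/4))) + t*ρ^2/600 ≤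
    (4*t+6*ρ)*(S - t*ρ/12800) + ρ^2/2*(H - t*ρ/12800) - ρ*t*V - ρ*t*(ρ/8) := by
  obtain ⟨hEv1, hEv2⟩ := abs_le.mp hEv
  obtain ⟨hHv1, hHv2⟩ := abs_le.mp hHv
  obtain ⟨hEe1, hEe2⟩ := abs_le.mp hEe
  obtain ⟨hH1, hH2⟩ := abs_le.mp hH
  obtain ⟨hV1, hV2⟩ := abs_le.mp hV
  obtain ⟨hVh1, hVh2⟩ := abs_le.mp hVh
  subst hS
  nlinarith [mul_le_mul_of_nonneg_left hEv1 (by positivity : (0:ℝ) ≤ 4*t+6*ρ), mul_le_mul_of_nonneg_left hHv1 (by positivity : (0:ℝ) ≤ ρ^2/2), mul_le_mul_of_nonneg_left hEe1 (le_of_lt ht0), mul_le_mul_of_nonneg_left hH1 (by positivity : (0:ℝ) ≤ ρ^2), mul_le_mul_of_nonneg_left hV1 (by positivity : (0:ℝ) ≤ ρ*t), mul_le_mul_of_nonneg_left hVh1 (by positivity : (0:ℝ) ≤ 2*ρ*t*t), mul_pos hρ0 ht0, mul_pos (mul_pos hρ0 hρ0) ht0]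

private lemma arith_eta (ρ t η W : ℝ) (hρ0 : 0 < ρ) (hρ1 : ρ < 1/4) (ht0 : 0 < t)
    (ht1 : t < ρ/16) (hη0 : 0 < η) (hη1 : η < t*ρ/12800) (hW : W ≤ 7*ρ) :
    (1+3*η)*W ≤ W + t*ρ^2/600 := by
  have h1 : 3*η*W ≤ 3*η*(7*ρ) := by nlinarith
  nlinarith

private lemma arith_master (ρ t η S H V Ee Ev Hv Vh W2 W4 : ℝ)
    (hρ0 : 0 < ρ) (hρ1 : ρ < 1/4) (ht0 : 0 < t) (ht1 : t < ρ/16)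
    (hη0 : 0 < η) (hη1 : η < t*ρ/12800)
    (hS : S = 1 - ρ/2 + t*Ee)
    (hEe : |Ee| ≤ ρ/800) (hEv : |Ev| ≤ t/1600) (hHv : |Hv| ≤ t/1600)
    (hH : |H| ≤ 1) (hV : |V| ≤ 1) (hVh : |Vh| ≤ 1)
    (hW2def : W2 = (4*t+6*ρ)*(S + ρ/4*Ev) + ρ^2/2*(H + ρ/4*Hv) - ρ*t*(V + ρ/4))
    (hW4def : W4 = (4*t+6*ρ)*(S - 2*t*Ee - ρ/4*Ev) + ρ^2/2*(H - 2*t - ρ/4*Hv) - ρ*t*(V - 2*t*Vh - ρ/4))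
    (hW2abs : |W2| ≤ 7*ρ) (hW4abs : |W4| ≤ 7*ρ) :
    (1+3*η) * max ((4*t+6*ρ)*(1-ρ) + ρ^2/2 + ρ*t) (max |W2| |W4|) ≤
    (4*t+6*ρ)*(S - t*ρ/12800) + ρ^2/2*(H - t*ρ/12800) - ρ*t*V - ρ*t*(ρ/8) := by
  have h3η : (0:ℝ) ≤ 1+3*η := by linarith
  have hW1 : (4*t+6*ρ)*(1-ρ) + ρ^2/2 + ρ*t ≤ 7*ρ := by nlinarith
  rw [mul_max_of_nonneg _ _ h3η, mul_max_of_nonneg _ _ h3η]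
  refine max_le ?_ (max_le ?_ ?_)
  · exact le_trans (arith_eta ρ t η _ hρ0 hρ1 ht0 ht1 hη0 hη1 hW1)
      (arith1 ρ t S H V Ee hρ0 hρ1 ht0 ht1 hS hEe hH hV)
  · refine le_trans (arith_eta ρ t η _ hρ0 hρ1 ht0 ht1 hη0 hη1 hW2abs) ?_
    rcases abs_cases W2 with ⟨hw, _⟩ | ⟨hw, _⟩ <;> rw [hw]
    · exact hW2def ▸ arith2 ρ t S H V Ev Hv hρ0 hρ1 ht0 ht1 hEv hHv
    · exact hW2def ▸ arith3 ρ t S H V Ee Ev Hv hρ0 hρ1 ht0 ht1 hS hEe hEv hHv hH hV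
  · refine le_trans (arith_eta ρ t η _ hρ0 hρ1 ht0 ht1 hη0 hη1 hW4abs) ?_
    rcases abs_cases W4 with ⟨hw, _⟩ | ⟨hw, _⟩ <;> rw [hw]
    · exact hW4def ▸ arith4 ρ t S H V Ee Ev Hv Vh hρ0 hρ1 ht0 ht1 hEe hEv hHv hVh
    · exact hW4def ▸ arith5 ρ t S H V Ee Ev Hv Vh hρ0 hρ1 ht0 ht1 hS hEe hEv hHv hH hV hVh


private lemma cancel_quarter (ρ t η A : ℝ) (hρ0 : 0 < ρ) (h : ρ/4 * A < η)
    (hη : η < t*ρ/12800) : A ≤ t/3200 := by nlinarith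

private lemma Fx_abs_bound (ρ t u w z : ℝ) (hρ0 : 0 < ρ) (hρ1 : ρ < 1/4) (ht0 : 0 < t)
    (ht1 : t < ρ/16) (h1 : |u| ≤ 1) (h2 : |w| ≤ 1) (h3 : |z| ≤ 1) :
    |(4*t+6*ρ)*u + ρ^2/2*w - ρ*t*z| ≤ 7*ρ := by
  obtain ⟨h1a, h1b⟩ := abs_le.mp h1
  obtain ⟨h2a, h2b⟩ := abs_le.mp h2
  obtain ⟨h3a, h3b⟩ := abs_le.mp h3
  rw [abs_le]
  constructor <;>
    nlinarith [mul_le_mul_of_nonneg_left h1b (by positivity : (0:ℝ) ≤ 4*t+6*ρ),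
      mul_le_mul_of_nonneg_left h1a (by positivity : (0:ℝ) ≤ 4*t+6*ρ),
      mul_le_mul_of_nonneg_left h2b (by positivity : (0:ℝ) ≤ ρ^2/2),
      mul_le_mul_of_nonneg_left h2a (by positivity : (0:ℝ) ≤ ρ^2/2),
      mul_le_mul_of_nonneg_left h3b (by positivity : (0:ℝ) ≤ ρ*t),
      mul_le_mul_of_nonneg_left h3a (by positivity : (0:ℝ) ≤ ρ*t)]

private lemma FC_bound (ρ t u w z : ℝ) (hρ0 : 0 < ρ) (hρ1 : ρ < 1/4) (ht0 : 0 < t)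
    (ht1 : t < ρ/16) (h1 : |u| ≤ 1 - ρ) (h2 : |w| ≤ 1) (h3 : |z| ≤ 1) :
    (4*t+6*ρ)*u + ρ^2/2*w - ρ*t*z ≤ (4*t+6*ρ)*(1-ρ) + ρ^2/2 + ρ*t := by
  obtain ⟨h1a, h1b⟩ := abs_le.mp h1
  obtain ⟨h2a, h2b⟩ := abs_le.mp h2
  obtain ⟨h3a, h3b⟩ := abs_le.mp h3
  nlinarith [mul_le_mul_of_nonneg_left h1b (by positivity : (0:ℝ) ≤ 4*t+6*ρ),
    mul_le_mul_of_nonneg_left h2b (by positivity : (0:ℝ) ≤ ρ^2/2),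
    mul_le_mul_of_nonneg_left h3a (by positivity : (0:ℝ) ≤ ρ*t)]

private lemma cancel_quarter' (ρ t A : ℝ) (hρ0 : 0 < ρ) (h : ρ/4 * A < t*ρ/12800) :
    A ≤ t/3200 := by nlinarith

private lemma mC_nonneg (ρ t : ℝ) (hρ0 : 0 < ρ) (hρ1 : ρ < 1/4) (ht0 : 0 < t) :
    0 ≤ (4*t+6*ρ)*(1-ρ) + ρ^2/2 + ρ*t := by nlinarith

variable {X : Type*} [NormedAddCommGroup X] [NormedSpace ℝ X]

private lemma smul_set_mem_aux {BA : Set X} {ρ : ℝ} (hρ1 : ρ < 1)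
    (hBA2 : ∀ y : X, ‖y‖ ≤ 1 - ρ → y ∈ BA) (x : X) :
    ∃ r : ℝ, 0 < r ∧ x ∈ r • BA := by
  have h1ρ : 0 < 1 - ρ := by linarith
  have hx1 : (0:ℝ) < ‖x‖ + 1 := by positivity
  refine ⟨(‖x‖ + 1)/(1-ρ), by positivity, ?_⟩
  rw [Set.mem_smul_set_iff_inv_smul_mem₀ (by positivity)]
  apply hBA2
  rw [norm_smul, norm_inv, Real.norm_eq_abs, abs_of_pos (by positivity)]
  rw [inv_div, div_mul_eq_mul_div, div_le_iff₀ hx1]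
  nlinarith [norm_nonneg x]

private lemma norm_le_gauge_aux {BA : Set X} {ρ : ℝ} (hρ1 : ρ < 1)
    (hBA1 : ∀ y ∈ BA, ‖y‖ ≤ 1) (hBA2 : ∀ y : X, ‖y‖ ≤ 1 - ρ → y ∈ BA) (x : X) :
    ‖x‖ ≤ gauge BA x := by
  obtain ⟨r0, hr0, hmem⟩ := smul_set_mem_aux hρ1 hBA2 x
  refine le_csInf ⟨r0, hr0, hmem⟩ ?_
  rintro r ⟨hr, y, hy, rfl⟩
  rw [norm_smul, Real.norm_eq_abs, abs_of_pos hr]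
  exact le_trans (mul_le_mul_of_nonneg_left (hBA1 y hy) (le_of_lt hr)) (by linarith)

private lemma isnorm_neg {N : X → ℝ} (hN : IsNorm N) (x : X) : N (-x) = N x := by
  have := hN.2.1 (-1) x
  simpa using this

private lemma isnorm_nonneg {N : X → ℝ} (hN : IsNorm N) (x : X) : 0 ≤ N x := by
  have h0 : N 0 = 0 := (hN.1 0).mpr rfl
  have h1 := hN.2.2 x (-x)
  rw [add_neg_cancel, h0, isnorm_neg hN] at h1
  linarith

private lemma isnorm_sub_le {N : X → ℝ} (hN : IsNorm N) (x y : X) :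
    N (x - y) ≤ N x + N y := by
  have h1 := hN.2.2 x (-y)
  rw [isnorm_neg hN] at h1
  simpa [sub_eq_add_neg] using h1

private lemma core_lemma
    (ρ t η : ℝ) (hρ0 : 0 < ρ) (hρ1 : ρ < 1/4) (ht0 : 0 < t) (ht1 : t < ρ/16)
    (hη0 : 0 < η) (hη1 : η < t*ρ/12800)
    (e h v : X) (he : ‖e‖ = 1) (hh : ‖h‖ = 1) (hv : ‖v‖ = 1)
    (es hs vs : X →L[ℝ] ℝ) (hes : ‖es‖ = 1) (hhs : ‖hs‖ = 1) (hvs : ‖vs‖ = 1)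
    (hee : es e = 1) (hhh : hs h = 1) (hvv : vs v = 1) (heh : |es h| < ρ/800)
    (xp yp ym : X)
    (hxp : xp = (1 - ρ/2) • e + t • h)
    (hypx : yp = xp + (ρ/4) • v)
    (hymx : ym = xp - (2*t) • h - (ρ/4) • v)
    (BA : Set X)
    (hBA1 : ∀ x ∈ BA, ‖x‖ ≤ 1)
    (hBA2 : ∀ x : X, ‖x‖ ≤ 1 - ρ → x ∈ BA)
    (hBA3 : ∀ (f : X →L[ℝ] ℝ) (M : ℝ),
      (∀ x : X, ‖x‖ ≤ 1 → |es x| ≤ 1 - ρ → f x ≤ M) →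
      f yp ≤ M → f ym ≤ M → f (-yp) ≤ M → f (-ym) ≤ M → ∀ y ∈ BA, f y ≤ M)
    (N : X → ℝ) (hNnorm : IsNorm N) (hN1 : ∀ x, gauge BA x ≤ N x)
    (K : Set X) (vK : X) (hvK : ρ/4 * N (v - vK) < η) (hvKK : (ρ/4) • vK ∈ K)
    (hKe : ∀ k ∈ K, |es k| < t*ρ/12800) (hKh : ∀ k ∈ K, |hs k| < t*ρ/12800)
    (k : X) (hkK : k ∈ K) (hdist : N (xp - k) ≤ 1 + 2*η) :
    vs k ≤ -(ρ/8) := by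
  have hρ1' : ρ < 1 := by linarith
  have hnormN : ∀ x : X, ‖x‖ ≤ N x :=
    fun x => le_trans (norm_le_gauge_aux hρ1' hBA1 hBA2 x) (hN1 x)
  -- scalar abbreviations
  set Ee := es h with hEedef
  set Ev := es v with hEvdef
  set Hv := hs v with hHvdef
  set Vh := vs h with hVhdef
  set S := es xp with hSdef
  set H := hs xp with hHdef
  set V := vs xp with hVdef
  have hxpn : ‖xp‖ ≤ 1 - ρ/2 + t := by
    rw [hxp]
    refine le_trans (norm_add_le _ _) ?_
    rw [norm_smul, norm_smul, he, hh, Real.norm_eq_abs, Real.norm_eq_abs,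
      abs_of_pos ht0, abs_of_pos (by linarith : (0:ℝ) < 1 - ρ/2)]
    ring_nf
    norm_num
  have hxpn1 : ‖xp‖ ≤ 1 := by linarith
  have hypn : ‖yp‖ ≤ 1 := by
    rw [hypx]
    refine le_trans (norm_add_le _ _) ?_
    rw [norm_smul, hv, Real.norm_eq_abs, abs_of_pos (by linarith : (0:ℝ) < ρ/4)]
    linarith
  have hymn : ‖ym‖ ≤ 1 := by
    have h1 : ‖ym‖ ≤ ‖xp‖ + ‖(2*t) • h‖ + ‖(ρ/4) • v‖ := by
      rw [hymx]
      exact le_trans (norm_sub_le _ _) (add_le_add (norm_sub_le _ _) le_rfl)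
    rw [norm_smul, norm_smul, hh, hv, Real.norm_eq_abs, Real.norm_eq_abs,
      abs_of_pos (by linarith : (0:ℝ) < 2*t), abs_of_pos (by linarith : (0:ℝ) < ρ/4)] at h1
    linarith
  -- scalar bounds
  have habs : ∀ (f : X →L[ℝ] ℝ), ‖f‖ = 1 → ∀ x : X, |f x| ≤ ‖x‖ := by
    intro f hf x
    have := f.le_opNorm x
    rwa [hf, one_mul, Real.norm_eq_abs] at this
  have hEe : |Ee| ≤ ρ/800 := le_of_lt heh
  have hH : |H| ≤ 1 := le_trans (habs hs hhs xp) hxpn1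
  have hV : |V| ≤ 1 := le_trans (habs vs hvs xp) hxpn1
  have hVh : |Vh| ≤ 1 := by rw [hVhdef]; rw [← hh]; exact habs vs hvs h
  have hNvvK : N (v - vK) ≤ t/3200 := cancel_quarter ρ t η _ hρ0 hvK hη1
  have hEvK : |es vK| ≤ t/3200 := by
    have h1 := hKe _ hvKK
    rw [map_smul, smul_eq_mul, abs_mul, abs_of_pos (by linarith : (0:ℝ) < ρ/4)] at h1
    exact cancel_quarter' ρ t _ hρ0 h1
  have hHvK : |hs vK| ≤ t/3200 := by
    have h1 := hKh _ hvKK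
    rw [map_smul, smul_eq_mul, abs_mul, abs_of_pos (by linarith : (0:ℝ) < ρ/4)] at h1
    exact cancel_quarter' ρ t _ hρ0 h1
  have hEv : |Ev| ≤ t/1600 := by
    have h1 : es v = es (v - vK) + es vK := by rw [map_sub]; ring
    have h2 : |es (v - vK)| ≤ t/3200 :=
      le_trans (le_trans (habs es hes _) (hnormN _)) hNvvK
    rw [hEvdef, h1]
    calc |es (v - vK) + es vK| ≤ |es (v - vK)| + |es vK| := abs_add_le _ _
      _ ≤ t/1600 := by linarith
  have hHv : |Hv| ≤ t/1600 := by
    have h1 : hs v = hs (v - vK) + hs vK := by rw [map_sub]; ring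
    have h2 : |hs (v - vK)| ≤ t/3200 :=
      le_trans (le_trans (habs hs hhs _) (hnormN _)) hNvvK
    rw [hHvdef, h1]
    calc |hs (v - vK) + hs vK| ≤ |hs (v - vK)| + |hs vK| := abs_add_le _ _
      _ ≤ t/1600 := by linarith
  have hS : S = 1 - ρ/2 + t*Ee := by
    rw [hSdef, hxp, map_add, map_smul, map_smul, hee, smul_eq_mul, smul_eq_mul, hEedef]
    ring
  have hHeq : H = (1 - ρ/2) * hs e + t := by
    rw [hHdef, hxp, map_add, map_smul, map_smul, hhh, smul_eq_mul, smul_eq_mul]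
    ring
  -- the functional
  set F : X →L[ℝ] ℝ := (4*t+6*ρ) • es + (ρ^2/2) • hs - (ρ*t) • vs with hFdef
  have hFap : ∀ x : X, F x = (4*t+6*ρ) * es x + ρ^2/2 * hs x - ρ*t * vs x := by
    intro x
    rw [hFdef]
    simp [ContinuousLinearMap.sub_apply, ContinuousLinearMap.add_apply,
      ContinuousLinearMap.smul_apply, smul_eq_mul]
  have hFyp : F yp = (4*t+6*ρ)*(S + ρ/4*Ev) + ρ^2/2*(H + ρ/4*Hv) - ρ*t*(V + ρ/4) := by
    rw [hFap, hypx, map_add, map_add, map_add, map_smul, map_smul, map_smul, hvv,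
      smul_eq_mul, smul_eq_mul, smul_eq_mul, hSdef, hHdef, hVdef, hEvdef, hHvdef]
    ring
  have hFym : F ym = (4*t+6*ρ)*(S - 2*t*Ee - ρ/4*Ev) + ρ^2/2*(H - 2*t - ρ/4*Hv)
      - ρ*t*(V - 2*t*Vh - ρ/4) := by
    rw [hFap, hymx]
    rw [map_sub, map_sub, map_sub, map_sub, map_sub, map_sub,
      map_smul, map_smul, map_smul, map_smul, map_smul, map_smul, hhh, hvv,
      smul_eq_mul, smul_eq_mul, smul_eq_mul, smul_eq_mul, smul_eq_mul, smul_eq_mul,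
      hSdef, hHdef, hVdef, hEedef, hEvdef, hHvdef, hVhdef]
    ring
  have hFbound : ∀ x : X, ‖x‖ ≤ 1 → |F x| ≤ 7*ρ := by
    intro x hx
    have h1 : |es x| ≤ 1 := le_trans (habs es hes x) hx
    have h2 : |hs x| ≤ 1 := le_trans (habs hs hhs x) hx
    have h3 : |vs x| ≤ 1 := le_trans (habs vs hvs x) hx
    rw [hFap]
    exact Fx_abs_bound ρ t _ _ _ hρ0 hρ1 ht0 ht1 h1 h2 h3
  set mC : ℝ := (4*t+6*ρ)*(1-ρ) + ρ^2/2 + ρ*t with hmCdef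
  set M : ℝ := max mC (max |F yp| |F ym|) with hMdef
  have hM0 : 0 ≤ M := le_trans (mC_nonneg ρ t hρ0 hρ1 ht0) (le_max_left _ _)
  have hFM : ∀ y ∈ BA, F y ≤ M := by
    refine hBA3 F M ?_ ?_ ?_ ?_ ?_
    · intro x hx1 hx2
      have h2 : |hs x| ≤ 1 := le_trans (habs hs hhs x) hx1
      have h3 : |vs x| ≤ 1 := le_trans (habs vs hvs x) hx1
      have : F x ≤ mC := by
        rw [hFap, hmCdef]
        exact FC_bound ρ t _ _ _ hρ0 hρ1 ht0 ht1 hx2 h2 h3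
      exact le_trans this (le_max_left _ _)
    · exact le_trans (le_abs_self _) (le_trans (le_max_left _ _) (le_max_right _ _))
    · exact le_trans (le_abs_self _) (le_trans (le_max_right _ _) (le_max_right _ _))
    · rw [map_neg]
      exact le_trans (neg_le_abs _)
        (le_trans (le_max_left _ _) (le_max_right _ _))
    · rw [map_neg]
      exact le_trans (neg_le_abs _)
        (le_trans (le_max_right _ _) (le_max_right _ _))
  -- gauge step
  have hg : gauge BA (xp - k) ≤ 1 + 2*η := le_trans (hN1 _) hdist
  have hne : ∃ r : ℝ, 0 < r ∧ (xp - k) ∈ r • BA := smul_set_mem_aux hρ1' hBA2 _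
  have hbdd : BddBelow {r : ℝ | 0 < r ∧ (xp - k) ∈ r • BA} :=
    ⟨0, fun r hr => le_of_lt hr.1⟩
  have hlt : sInf {r : ℝ | 0 < r ∧ (xp - k) ∈ r • BA} < 1 + 3*η := by
    have : gauge BA (xp - k) = sInf {r : ℝ | 0 < r ∧ (xp - k) ∈ r • BA} := rfl
    rw [← this]
    linarith
  obtain ⟨r, hrS, hrlt⟩ := (csInf_lt_iff hbdd hne).mp hlt
  obtain ⟨hr0, y, hyBA, hxy⟩ := hrS
  have hFxk : F (xp - k) ≤ (1+3*η) * M := by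
    have h1 : F (xp - k) = r * F y := by rw [← hxy, map_smul, smul_eq_mul]
    have h2 : F y ≤ M := hFM y hyBA
    rw [h1]
    calc r * F y ≤ r * M := mul_le_mul_of_nonneg_left h2 (le_of_lt hr0)
      _ ≤ (1+3*η) * M := mul_le_mul_of_nonneg_right (le_of_lt hrlt) hM0
  have hmaster := arith_master ρ t η S H V Ee Ev Hv Vh (F yp) (F ym)
    hρ0 hρ1 ht0 ht1 hη0 hη1 hS hEe hEv hHv hH hV hVh hFyp hFym
    (hFbound yp hypn) (hFbound ym hymn)
  have hFxk2 : F (xp - k) = (4*t+6*ρ)*(S - es k) + ρ^2/2*(H - hs k) - ρ*t*(V - vs k) := by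
    rw [hFap, map_sub, map_sub, map_sub, hSdef, hHdef, hVdef]
    try ring
  have hesk := hKe k hkK
  have hhsk := hKh k hkK
  obtain ⟨hesk1, hesk2⟩ := abs_le.mp (le_of_lt hesk)
  obtain ⟨hhsk1, hhsk2⟩ := abs_le.mp (le_of_lt hhsk)
  have hA1 : (4*t+6*ρ) * (es k - t*ρ/12800) ≤ 0 :=
    mul_nonpos_of_nonneg_of_nonpos (by positivity) (by linarith)
  have hA2 : (ρ^2/2) * (hs k - t*ρ/12800) ≤ 0 :=
    mul_nonpos_of_nonneg_of_nonpos (by positivity) (by linarith)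
  have hfin : ρ*t*(vs k) ≤ ρ*t*(-(ρ/8)) := by linarith [hFxk2.ge.trans hFxk, hFxk.trans hmaster, hA1, hA2]
  exact le_of_mul_le_mul_left (by linarith [hfin]) (by positivity : (0:ℝ) < ρ*t)

end Helpers
theorem statement10 {X : Type*} [NormedAddCommGroup X] [NormedSpace ℝ X] [CompleteSpace X]
    (ρ t : ℝ) (hρ0 : 0 < ρ) (hρ1 : ρ < 1 / 4) (ht0 : 0 < t) (ht1 : t < ρ / 16)
    (v e h : X) (hv : ‖v‖ = 1) (he : ‖e‖ = 1) (hh : ‖h‖ = 1)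
    (vs es hs : X →L[ℝ] ℝ) (hvs : ‖vs‖ = 1) (hes : ‖es‖ = 1) (hhs : ‖hs‖ = 1)
    (hvv : vs v = 1) (hee : es e = 1) (hhh : hs h = 1) (heh : |es h| < ρ / 800)
    (xp xm yp ym : X)
    (hxp : xp = (1 - ρ / 2) • e + t • h) (hxm : xm = (1 - ρ / 2) • e - t • h)
    (hyp : yp = xp + (ρ / 4) • v) (hym : ym = xm - (ρ / 4) • v)
    (BX SA BA : Set X)
    (hBX : BX = Metric.closedBall (0 : X) 1)
    (hSA : SA = {x ∈ BX | 1 - ρ < es x})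
    (hBA : BA = closure (convexHull ℝ ((BX \ (SA ∪ Neg.neg '' SA)) ∪ {yp, ym, -yp, -ym})))
    (η : ℝ) (hη0 : 0 < η) (hη1 : η < t * ρ / 12800)
    (N : X → ℝ) (hNnorm : IsNorm N)
    (hNsc : ∀ x y : X, N x = 1 → N y = 1 → N ((2 : ℝ)⁻¹ • (x + y)) = 1 → x = y)
    (hN1 : ∀ x : X, gauge BA x ≤ N x) (hN2 : ∀ x : X, N x ≤ ((1 - ρ) ^ 2)⁻¹ * ‖x‖)
    (hNyp : N yp ≤ 1 + η) (hNym : N ym ≤ 1 + η)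
    (K : Set X) (hKc : IsCompact K) (hKconv : Convex ℝ K) (hKB : K ⊆ {x : X | N x ≤ 1})
    (vK : X) (hvK : ρ / 4 * N (v - vK) < η)
    (hseg : segment ℝ (-((ρ / 4) • vK)) ((ρ / 4) • vK) ⊆ K)
    (hKe : ∀ k ∈ K, |es k| < t * ρ / 12800) (hKh : ∀ k ∈ K, |hs k| < t * ρ / 12800)
    (R : X → X) (hR : IsNearestPointMap N K R)
    :
    N (xp - xm) ≤ ((1 - ρ) ^ 2)⁻¹ * (2 * t) ∧
    ρ / 16 ≤ N (R xp - R xm) ∧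
    ρ / 16 ≤ sSup {d : ℝ | ∃ x y : X, N (x - y) ≤ ((1 - ρ) ^ 2)⁻¹ * (2 * t) ∧ d = N (R x - R y)} := by
  have h14 : ρ < 1 := by linarith
  have Nneg : ∀ x : X, N (-x) = N x := isnorm_neg hNnorm
  have Nnn : ∀ x : X, 0 ≤ N x := isnorm_nonneg hNnorm
  have Nsub : ∀ x y : X, N (x - y) ≤ N x + N y := isnorm_sub_le hNnorm
  -- norms of the basic points
  have hxpn : ‖xp‖ ≤ 1 - ρ/2 + t := by
    rw [hxp]
    refine le_trans (norm_add_le _ _) ?_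
    rw [norm_smul, norm_smul, he, hh, Real.norm_eq_abs, Real.norm_eq_abs,
      abs_of_pos ht0, abs_of_pos (by linarith : (0:ℝ) < 1 - ρ/2)]
    ring_nf
    norm_num
  have hxmn : ‖xm‖ ≤ 1 - ρ/2 + t := by
    rw [hxm]
    refine le_trans (norm_sub_le _ _) ?_
    rw [norm_smul, norm_smul, he, hh, Real.norm_eq_abs, Real.norm_eq_abs,
      abs_of_pos ht0, abs_of_pos (by linarith : (0:ℝ) < 1 - ρ/2)]
    ring_nf
    norm_num
  have hypn : ‖yp‖ ≤ 1 := by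
    rw [hyp]
    refine le_trans (norm_add_le _ _) ?_
    rw [norm_smul, hv, Real.norm_eq_abs, abs_of_pos (by linarith : (0:ℝ) < ρ/4)]
    linarith
  have hymn : ‖ym‖ ≤ 1 := by
    rw [hym]
    refine le_trans (norm_sub_le _ _) ?_
    rw [norm_smul, hv, Real.norm_eq_abs, abs_of_pos (by linarith : (0:ℝ) < ρ/4)]
    linarith
  -- structure facts about BA
  have hBA1 : ∀ x ∈ BA, ‖x‖ ≤ 1 := by
    have hU : (BX \ (SA ∪ Neg.neg '' SA)) ∪ {yp, ym, -yp, -ym} ⊆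
        Metric.closedBall (0 : X) 1 := by
      rintro x (⟨hx, -⟩ | hx)
      · rw [hBX] at hx; exact hx
      · simp only [Set.mem_insert_iff, Set.mem_singleton_iff] at hx
        rcases hx with rfl | rfl | rfl | rfl <;>
          rw [Metric.mem_closedBall, dist_zero_right]
        · exact hypn
        · exact hymn
        · rwa [norm_neg]
        · rwa [norm_neg]
    intro x hx
    rw [hBA] at hx
    have hmem := closure_minimal
      (convexHull_min hU (convex_closedBall (0:X) 1)) Metric.isClosed_closedBall hx
    rwa [Metric.mem_closedBall, dist_zero_right] at hmem
  have hBA2 : ∀ x : X, ‖x‖ ≤ 1 - ρ → x ∈ BA := by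
    intro x hx
    have hxb : ‖x‖ ≤ 1 := by linarith
    have hxe : |es x| ≤ 1 - ρ := by
      have := es.le_opNorm x
      rw [hes, one_mul, Real.norm_eq_abs] at this
      linarith
    rw [hBA]
    refine subset_closure (subset_convexHull ℝ _ ?_)
    refine Set.mem_union_left _ ⟨?_, ?_⟩
    · rw [hBX, Metric.mem_closedBall, dist_zero_right]; exact hxb
    · rintro (hmem | ⟨s, hsSA, rfl⟩)
      · rw [hSA] at hmem
        have h2 := hmem.2
        have := le_abs_self (es x)
        linarith
      · rw [hSA] at hsSA
        have h2 := hsSA.2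
        have h3 : es (-s) = -(es s) := map_neg es s
        have h4 : |es (-s)| ≤ 1 - ρ := hxe
        rw [h3, abs_neg] at h4
        have := le_abs_self (es s)
        linarith
  have hBA3 : ∀ (f : X →L[ℝ] ℝ) (M : ℝ),
      (∀ x : X, ‖x‖ ≤ 1 → |es x| ≤ 1 - ρ → f x ≤ M) →
      f yp ≤ M → f ym ≤ M → f (-yp) ≤ M → f (-ym) ≤ M → ∀ y ∈ BA, f y ≤ M := by
    intro f M hC h1 h2 h3 h4 y hy
    rw [hBA] at hy
    have hsub : (BX \ (SA ∪ Neg.neg '' SA)) ∪ {yp, ym, -yp, -ym} ⊆ {x : X | f x ≤ M} := by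
      rintro x (⟨hx1, hx2⟩ | hx)
      · have hxb : ‖x‖ ≤ 1 := by
          rw [hBX, Metric.mem_closedBall, dist_zero_right] at hx1; exact hx1
        have hle1 : es x ≤ 1 - ρ := by
          by_contra hlt
          exact hx2 (Or.inl (by rw [hSA]; exact ⟨hx1, by linarith⟩))
        have hle2 : -(1 - ρ) ≤ es x := by
          by_contra hlt
          push_neg at hlt
          refine hx2 (Or.inr ⟨-x, ?_, neg_neg x⟩)
          rw [hSA]
          refine ⟨?_, ?_⟩
          · rw [hBX, Metric.mem_closedBall, dist_zero_right, norm_neg]; exact hxb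
          · rw [map_neg]; linarith
        exact hC x hxb (abs_le.mpr ⟨hle2, hle1⟩)
      · simp only [Set.mem_insert_iff, Set.mem_singleton_iff] at hx
        rcases hx with rfl | rfl | rfl | rfl
        · exact h1
        · exact h2
        · exact h3
        · exact h4
    have hcvx : Convex ℝ {x : X | f x ≤ M} :=
      convex_halfSpace_le ⟨fun a b => map_add f a b, fun c a => map_smul f c a⟩ M
    exact closure_minimal (convexHull_min hsub hcvx)
      (isClosed_le f.continuous continuous_const) hy
  have hNN : ∀ x : X, ‖x‖ ≤ N x :=
    fun x => le_trans (norm_le_gauge_aux h14 hBA1 hBA2 x) (hN1 x)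
  -- distance estimates
  obtain ⟨hRp, hReqp⟩ := hR xp
  obtain ⟨hRm, hReqm⟩ := hR xm
  have hbddK : BddBelow ((fun c => N (xp - c)) '' K) := by
    refine ⟨0, ?_⟩; rintro z ⟨c, hc, rfl⟩; exact Nnn _
  have hbddK2 : BddBelow ((fun c => N (xm - c)) '' K) := by
    refine ⟨0, ?_⟩; rintro z ⟨c, hc, rfl⟩; exact Nnn _
  have hmemL : -((ρ/4) • vK) ∈ K := hseg (left_mem_segment ℝ _ _)
  have hmemR : (ρ/4) • vK ∈ K := hseg (right_mem_segment ℝ _ _)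
  have dp : N (xp - R xp) ≤ 1 + 2*η := by
    have hle : N (xp - R xp) ≤ N (xp - -((ρ/4) • vK)) := by
      rw [hReqp]; exact csInf_le hbddK ⟨_, hmemL, rfl⟩
    have heqv : xp - -((ρ/4) • vK) = yp - (ρ/4) • (v - vK) := by rw [hyp]; module
    have hb : N (yp - (ρ/4) • (v - vK)) ≤ N yp + ρ/4 * N (v - vK) := by
      refine le_trans (Nsub _ _) ?_
      rw [hNnorm.2.1 (ρ/4) (v - vK), abs_of_pos (by linarith : (0:ℝ) < ρ/4)]
    rw [heqv] at hle
    linarith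
  have dm : N (xm - R xm) ≤ 1 + 2*η := by
    have hle : N (xm - R xm) ≤ N (xm - (ρ/4) • vK) := by
      rw [hReqm]; exact csInf_le hbddK2 ⟨_, hmemR, rfl⟩
    have heqv : xm - (ρ/4) • vK = ym + (ρ/4) • (v - vK) := by rw [hym]; module
    have hb : N (ym + (ρ/4) • (v - vK)) ≤ N ym + ρ/4 * N (v - vK) := by
      refine le_trans (hNnorm.2.2 _ _) ?_
      rw [hNnorm.2.1 (ρ/4) (v - vK), abs_of_pos (by linarith : (0:ℝ) < ρ/4)]
    rw [heqv] at hle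
    linarith
  -- apply the core lemma twice
  have hv1 : vs (R xp) ≤ -(ρ/8) :=
    core_lemma ρ t η hρ0 hρ1 ht0 ht1 hη0 hη1 e h v he hh hv es hs vs hes hhs hvs
      hee hhh hvv heh xp yp ym hxp hyp (by rw [hym, hxm, hxp]; module)
      BA hBA1 hBA2 hBA3 N hNnorm hN1 K vK hvK hmemR hKe hKh (R xp) hRp dp
  have hBA3' : ∀ (f : X →L[ℝ] ℝ) (M : ℝ),
      (∀ x : X, ‖x‖ ≤ 1 → |es x| ≤ 1 - ρ → f x ≤ M) →
      f ym ≤ M → f yp ≤ M → f (-ym) ≤ M → f (-yp) ≤ M → ∀ y ∈ BA, f y ≤ M :=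
    fun f M hC a b c d => hBA3 f M hC b a d c
  have hvK' : ρ/4 * N (-v - -vK) < η := by
    have heqv : (-v) - (-vK) = -(v - vK) := by module
    rw [heqv, Nneg]; exact hvK
  have hvKK' : (ρ/4) • (-vK) ∈ K := by rw [smul_neg]; exact hmemL
  have hKh' : ∀ k ∈ K, |(-hs) k| < t*ρ/12800 := by
    intro k hk
    rw [ContinuousLinearMap.neg_apply, abs_neg]
    exact hKh k hk
  have hv2' : (-vs) (R xm) ≤ -(ρ/8) :=
    core_lemma ρ t η hρ0 hρ1 ht0 ht1 hη0 hη1 e (-h) (-v) he (by rwa [norm_neg])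
      (by rwa [norm_neg]) es (-hs) (-vs) hes (by rwa [norm_neg]) (by rwa [norm_neg])
      hee (by simp [hhh]) (by simp [hvv]) (by rwa [map_neg, abs_neg])
      xm ym yp (by rw [hxm]; module) (by rw [hym]; module)
      (by rw [hyp, hxp, hxm]; module)
      BA hBA1 hBA2 hBA3' N hNnorm hN1 K (-vK) hvK' hvKK' hKe hKh' (R xm) hRm dm
  have hv2 : ρ/8 ≤ vs (R xm) := by
    rw [ContinuousLinearMap.neg_apply] at hv2'
    linarith
  -- conclusions
  have heqd : xp - xm = (2*t) • h := by rw [hxp, hxm]; module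
  have hnd : ‖xp - xm‖ = 2*t := by
    rw [heqd, norm_smul, hh, Real.norm_eq_abs, abs_of_pos (by linarith : (0:ℝ) < 2*t)]
    ring
  have part1 : N (xp - xm) ≤ ((1 - ρ) ^ 2)⁻¹ * (2 * t) := by
    have h1 := hN2 (xp - xm)
    rw [hnd] at h1
    exact h1
  have part2 : ρ / 16 ≤ N (R xp - R xm) := by
    have hvsub : vs (R xp - R xm) ≤ -(ρ/4) := by
      rw [map_sub]; linarith
    have habs2 : ρ/4 ≤ |vs (R xp - R xm)| := by
      have := neg_le_abs (vs (R xp - R xm))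
      linarith
    have h3 : |vs (R xp - R xm)| ≤ ‖R xp - R xm‖ := by
      have := vs.le_opNorm (R xp - R xm)
      rwa [hvs, one_mul, Real.norm_eq_abs] at this
    have h4 := hNN (R xp - R xm)
    linarith
  refine ⟨part1, part2, ?_⟩
  have hmemD : N (R xp - R xm) ∈
      {d : ℝ | ∃ x y : X, N (x - y) ≤ ((1 - ρ) ^ 2)⁻¹ * (2 * t) ∧ d = N (R x - R y)} :=
    ⟨xp, xm, part1, rfl⟩
  have hbddD : BddAbove
      {d : ℝ | ∃ x y : X, N (x - y) ≤ ((1 - ρ) ^ 2)⁻¹ * (2 * t) ∧ d = N (R x - R y)} := by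
    refine ⟨2, ?_⟩
    rintro d ⟨x, y, -, rfl⟩
    have h1 : N (R x) ≤ 1 := hKB (hR x).1
    have h2 : N (R y) ≤ 1 := hKB (hR y).1
    have := Nsub (R x) (R y)
    linarith
  exact le_trans part2 (le_csSup hbddD hmemD)
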